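/- Let γ ∈ [1/2,1), N ≥ 1 an integer, and define the iterates Q⁻₀ ≡ 0, Q⁻_t = T̂⁻(Q⁻_{t−1}) and Q⁺₀ ≡ 1/(1−γ), Q⁺_t = T̂⁺(Q⁺_{t−1}) for t ≥ 1, and let Q_pe^{−⋆}, Q_pe^{+⋆} be the unique fixed points of T̂⁻, T̂⁺ in {Q : 𝒮×𝒜×ℬ → [0, 1/(1−γ)]}, with associated value functions V_pe^{−⋆}, V_pe^{+⋆}. Then: (i) for every t ≥ 0, Q⁻_t ≤ Q_pe^{−⋆} and Q⁺_t ≥ Q_pe^{+⋆} entrywise; and (ii) for T = ⌈log(N/(1−γ))/log(1/γ)⌉, one has ‖Q⁻_T − Q_pe^{−⋆}‖_∞ ≤ γ^T/(1−γ) ≤ 1/N and ‖Q⁺_T − Q_pe^{+⋆}‖_∞ ≤ γ^T/(1−γ) ≤ 1/N, and hence the associated value functions satisfy ‖V_{Q⁻_T} − V_pe^{−⋆}‖_∞ ≤ 1/N and ‖V_{Q⁺_T} − V_pe^{+⋆}‖_∞ ≤ 1/N. -/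

import Mathlib

open scoped BigOperators ENNReal Classical

noncomputable section

namespace ZSMG

variable {𝒮 𝒜 ℬ : Type} [Fintype 𝒮] [Fintype 𝒜] [Fintype ℬ]
  [DecidableEq 𝒮] [DecidableEq 𝒜] [DecidableEq ℬ]

/-- Expectation of `V : 𝒮 → ℝ` under the (sub)probability vector `p`. -/
def Pexp (p V : 𝒮 → ℝ) : ℝ := ∑ s', p s' * V s'

/-- Variance of `V` under `p`: `Var_p(V) = p(V∘V) − (pV)²`. -/
def varP (p V : 𝒮 → ℝ) : ℝ := Pexp p (fun s => V s * V s) - (Pexp p V) ^ 2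

/-- Payoff of mixed strategies `w, z` in the matrix game `M`. -/
def pay (M : 𝒜 → ℬ → ℝ) (w : 𝒜 → ℝ) (z : ℬ → ℝ) : ℝ :=
  ∑ a, ∑ b, w a * z b * M a b

/-- Value function associated with a Q-function: minimax value at each state. -/
def valQ (Q : 𝒮 → 𝒜 → ℬ → ℝ) (s : 𝒮) : ℝ :=
  ⨆ w : stdSimplex ℝ 𝒜, ⨅ z : stdSimplex ℝ ℬ, pay (Q s) w.1 z.1

/-- Sup norm over states. -/
def supNormS (f : 𝒮 → ℝ) : ℝ := ⨆ s, |f s|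

/-- Sup norm over state-action triples. -/
def supNormQ (f : 𝒮 → 𝒜 → ℬ → ℝ) : ℝ := ⨆ s, ⨆ a, ⨆ b, |f s a b|

/-- The Bernstein-style penalty `β(s,a,b;V)`; `n` is the count `N(s,a,b)` and
`p` is the row `P̂(·|s,a,b)` of the empirical kernel. -/
def penalty (γ δ Cb : ℝ) (N n : ℕ) (p V : 𝒮 → ℝ) : ℝ :=
  (if n = 0 then 1 / (1 - γ)
   else
     min
       (max (Real.sqrt (Cb * Real.log ((N : ℝ) / ((1 - γ) * δ)) * varP p V / (n : ℝ)))
         (2 * Cb * Real.log ((N : ℝ) / ((1 - γ) * δ)) / ((1 - γ) * (n : ℝ))))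
       (1 / (1 - γ))) + 4 / (N : ℝ)

/-- The pessimistic Bellman operator for the max-player. -/
def TpeMinus (γ δ Cb : ℝ) (N : ℕ) (n : 𝒮 → 𝒜 → ℬ → ℕ)
    (Ph : 𝒮 → 𝒜 → ℬ → 𝒮 → ℝ) (rh : 𝒮 → 𝒜 → ℬ → ℝ)
    (Q : 𝒮 → 𝒜 → ℬ → ℝ) : 𝒮 → 𝒜 → ℬ → ℝ := fun s a b =>
  max (rh s a b + γ * Pexp (Ph s a b) (valQ Q)
        - penalty γ δ Cb N (n s a b) (Ph s a b) (valQ Q)) 0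

/-- The pessimistic Bellman operator for the min-player. -/
def TpePlus (γ δ Cb : ℝ) (N : ℕ) (n : 𝒮 → 𝒜 → ℬ → ℕ)
    (Ph : 𝒮 → 𝒜 → ℬ → 𝒮 → ℝ) (rh : 𝒮 → 𝒜 → ℬ → ℝ)
    (Q : 𝒮 → 𝒜 → ℬ → ℝ) : 𝒮 → 𝒜 → ℬ → ℝ := fun s a b =>
  min (rh s a b + γ * Pexp (Ph s a b) (valQ Q)
        + penalty γ δ Cb N (n s a b) (Ph s a b) (valQ Q)) (1 / (1 - γ))

/-- Count `N(s,a,b)` of occurrences of `(s,a,b)` in the dataset `D`. -/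
def cnt {N : ℕ} (D : Fin N → 𝒮 × 𝒜 × ℬ × 𝒮) (s : 𝒮) (a : 𝒜) (b : ℬ) : ℕ :=
  (Finset.univ.filter fun i => (D i).1 = s ∧ (D i).2.1 = a ∧ (D i).2.2.1 = b).card

/-- Count of full transitions `(s,a,b,s')` in the dataset `D`. -/
def cntT {N : ℕ} (D : Fin N → 𝒮 × 𝒜 × ℬ × 𝒮) (s : 𝒮) (a : 𝒜) (b : ℬ) (s' : 𝒮) : ℕ :=
  (Finset.univ.filter fun i => D i = (s, a, b, s')).card

/-- Empirical transition kernel `P̂(·|s,a,b)` built from the dataset. -/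
def Phat {N : ℕ} (D : Fin N → 𝒮 × 𝒜 × ℬ × 𝒮) (s : 𝒮) (a : 𝒜) (b : ℬ) : 𝒮 → ℝ := fun s' =>
  if cnt D s a b = 0 then ((Fintype.card 𝒮 : ℝ))⁻¹
  else (cntT D s a b s' : ℝ) / (cnt D s a b : ℝ)

/-- Empirical reward `r̂` built from the dataset. -/
def rhat {N : ℕ} (r : 𝒮 → 𝒜 → ℬ → ℝ) (D : Fin N → 𝒮 × 𝒜 × ℬ × 𝒮)
    (s : 𝒮) (a : 𝒜) (b : ℬ) : ℝ :=
  if cnt D s a b = 0 then 0 else r s a b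

/-- Number of iterations `T = ⌈log(N/(1−γ))/log(1/γ)⌉` of VI-LCB-Game. -/
def Titer (γ : ℝ) (N : ℕ) : ℕ := ⌈Real.log ((N : ℝ) / (1 - γ)) / Real.log (1 / γ)⌉₊

/-- `Q_pe^− = Q⁻_T` produced by VI-LCB-Game on the dataset `D`. -/
def QpeMinus (γ δ Cb : ℝ) (r : 𝒮 → 𝒜 → ℬ → ℝ) {N : ℕ}
    (D : Fin N → 𝒮 × 𝒜 × ℬ × 𝒮) : 𝒮 → 𝒜 → ℬ → ℝ :=
  (TpeMinus γ δ Cb N (cnt D) (Phat D) (rhat r D))^[Titer γ N] (fun _ _ _ => 0)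

/-- `Q_pe^+ = Q⁺_T` produced by VI-LCB-Game on the dataset `D`. -/
def QpePlus (γ δ Cb : ℝ) (r : 𝒮 → 𝒜 → ℬ → ℝ) {N : ℕ}
    (D : Fin N → 𝒮 × 𝒜 × ℬ × 𝒮) : 𝒮 → 𝒜 → ℬ → ℝ :=
  (TpePlus γ δ Cb N (cnt D) (Phat D) (rhat r D))^[Titer γ N] (fun _ _ _ => 1 / (1 - γ))

/-- `(w,z)` is a (mixed) Nash equilibrium / saddle point of the matrix game `M`. -/
def IsMatrixNash (M : 𝒜 → ℬ → ℝ) (w : 𝒜 → ℝ) (z : ℬ → ℝ) : Prop :=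
  w ∈ stdSimplex ℝ 𝒜 ∧ z ∈ stdSimplex ℝ ℬ ∧
    (∀ w' ∈ stdSimplex ℝ 𝒜, pay M w' z ≤ pay M w z) ∧
    (∀ z' ∈ stdSimplex ℝ ℬ, pay M w z ≤ pay M w z')

/-- `μ` is a possible max-player output of the algorithm, given the final Q-estimate `Q`. -/
def IsOutputMax (Q : 𝒮 → 𝒜 → ℬ → ℝ) (μ : 𝒮 → 𝒜 → ℝ) : Prop :=
  ∀ s, ∃ z, IsMatrixNash (Q s) (μ s) z

/-- `ν` is a possible min-player output of the algorithm, given the final Q-estimate `Q`. -/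
def IsOutputMin (Q : 𝒮 → 𝒜 → ℬ → ℝ) (ν : 𝒮 → ℬ → ℝ) : Prop :=
  ∀ s, ∃ w, IsMatrixNash (Q s) w (ν s)

/-- `μ` is a stationary (Markov) policy. -/
def IsPolicy (μ : 𝒮 → 𝒜 → ℝ) : Prop := ∀ s, μ s ∈ stdSimplex ℝ 𝒜

/-- `P` is a probability transition kernel. -/
def IsKernel (P : 𝒮 → 𝒜 → ℬ → 𝒮 → ℝ) : Prop := ∀ s a b, P s a b ∈ stdSimplex ℝ 𝒮

/-- `r` is a reward function with values in `[0,1]`. -/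
def IsReward (r : 𝒮 → 𝒜 → ℬ → ℝ) : Prop := ∀ s a b, r s a b ∈ Set.Icc (0 : ℝ) 1

/-- `d` is a probability distribution over `𝒮 × 𝒜 × ℬ`. -/
def IsDist3 (d : 𝒮 → 𝒜 → ℬ → ℝ) : Prop :=
  (∀ s a b, 0 ≤ d s a b) ∧ (∑ s, ∑ a, ∑ b, d s a b) = 1

/-- Transition matrix `P^{μ,ν}` of the product policy `μ × ν`. -/
def Pmat (P : 𝒮 → 𝒜 → ℬ → 𝒮 → ℝ) (μ : 𝒮 → 𝒜 → ℝ) (ν : 𝒮 → ℬ → ℝ) :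
    Matrix 𝒮 𝒮 ℝ :=
  Matrix.of fun s s' => ∑ a, ∑ b, μ s a * ν s b * P s a b s'

/-- Reward vector `r^{μ,ν}` of the product policy `μ × ν`. -/
def rPol (r : 𝒮 → 𝒜 → ℬ → ℝ) (μ : 𝒮 → 𝒜 → ℝ) (ν : 𝒮 → ℬ → ℝ) : 𝒮 → ℝ :=
  fun s => ∑ a, ∑ b, μ s a * ν s b * r s a b

/-- Value function `V^{μ,ν} = (I − γP^{μ,ν})⁻¹ r^{μ,ν}`. -/
def Vpol (γ : ℝ) (P : 𝒮 → 𝒜 → ℬ → 𝒮 → ℝ) (r : 𝒮 → 𝒜 → ℬ → ℝ)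
    (μ : 𝒮 → 𝒜 → ℝ) (ν : 𝒮 → ℬ → ℝ) : 𝒮 → ℝ :=
  Matrix.mulVec ((1 : Matrix 𝒮 𝒮 ℝ) - γ • Pmat P μ ν)⁻¹ (rPol r μ ν)

/-- `V^{μ,⋆}(s) = min_ν V^{μ,ν}(s)`. -/
def VmuStar (γ : ℝ) (P : 𝒮 → 𝒜 → ℬ → 𝒮 → ℝ) (r : 𝒮 → 𝒜 → ℬ → ℝ)
    (μ : 𝒮 → 𝒜 → ℝ) : 𝒮 → ℝ := fun s =>
  ⨅ ν : {ν : 𝒮 → ℬ → ℝ // IsPolicy ν}, Vpol γ P r μ ν.1 s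

/-- `V^{⋆,ν}(s) = max_μ V^{μ,ν}(s)`. -/
def VstarNu (γ : ℝ) (P : 𝒮 → 𝒜 → ℬ → 𝒮 → ℝ) (r : 𝒮 → 𝒜 → ℬ → ℝ)
    (ν : 𝒮 → ℬ → ℝ) : 𝒮 → ℝ := fun s =>
  ⨆ μ : {μ : 𝒮 → 𝒜 → ℝ // IsPolicy μ}, Vpol γ P r μ.1 ν s

/-- `Q^{μ,ν}(s,a,b) = r(s,a,b) + γ P(·|s,a,b) V^{μ,ν}`. -/
def Qpol (γ : ℝ) (P : 𝒮 → 𝒜 → ℬ → 𝒮 → ℝ) (r : 𝒮 → 𝒜 → ℬ → ℝ)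
    (μ : 𝒮 → 𝒜 → ℝ) (ν : 𝒮 → ℬ → ℝ) : 𝒮 → 𝒜 → ℬ → ℝ := fun s a b =>
  r s a b + γ * Pexp (P s a b) (Vpol γ P r μ ν)

/-- `Q^{μ,⋆}(s,a,b) = min_ν Q^{μ,ν}(s,a,b)`. -/
def QmuStar (γ : ℝ) (P : 𝒮 → 𝒜 → ℬ → 𝒮 → ℝ) (r : 𝒮 → 𝒜 → ℬ → ℝ)
    (μ : 𝒮 → 𝒜 → ℝ) : 𝒮 → 𝒜 → ℬ → ℝ := fun s a b =>
  ⨅ ν : {ν : 𝒮 → ℬ → ℝ // IsPolicy ν}, Qpol γ P r μ ν.1 s a b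

/-- `Q^{⋆,ν}(s,a,b) = max_μ Q^{μ,ν}(s,a,b)`. -/
def QstarNu (γ : ℝ) (P : 𝒮 → 𝒜 → ℬ → 𝒮 → ℝ) (r : 𝒮 → 𝒜 → ℬ → ℝ)
    (ν : 𝒮 → ℬ → ℝ) : 𝒮 → 𝒜 → ℬ → ℝ := fun s a b =>
  ⨆ μ : {μ : 𝒮 → 𝒜 → ℝ // IsPolicy μ}, Qpol γ P r μ.1 ν s a b

/-- `(μs, νs)` is a Nash equilibrium of the Markov game. -/
def IsNashPair (γ : ℝ) (P : 𝒮 → 𝒜 → ℬ → 𝒮 → ℝ) (r : 𝒮 → 𝒜 → ℬ → ℝ)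
    (μs : 𝒮 → 𝒜 → ℝ) (νs : 𝒮 → ℬ → ℝ) : Prop :=
  IsPolicy μs ∧ IsPolicy νs ∧
    (∀ μ, IsPolicy μ → ∀ s, Vpol γ P r μ νs s ≤ Vpol γ P r μs νs s) ∧
    (∀ ν, IsPolicy ν → ∀ s, Vpol γ P r μs νs s ≤ Vpol γ P r μs ν s)

/-- `V(ρ) = Σ_s ρ(s) V(s)`. -/
def wAvg (ρ V : 𝒮 → ℝ) : ℝ := ∑ s, ρ s * V s

/-- Discounted occupancy measure `d^{μ,ν}(s;ρ) = (1−γ) ρᵀ(I−γP^{μ,ν})⁻¹`. -/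
def dOcc (γ : ℝ) (P : 𝒮 → 𝒜 → ℬ → 𝒮 → ℝ) (μ : 𝒮 → 𝒜 → ℝ) (ν : 𝒮 → ℬ → ℝ)
    (ρ : 𝒮 → ℝ) : 𝒮 → ℝ := fun s =>
  (1 - γ) * Matrix.vecMul ρ ((1 : Matrix 𝒮 𝒮 ℝ) - γ • Pmat P μ ν)⁻¹ s

/-- `d^{μ,ν}(s,a,b;ρ) = d^{μ,ν}(s;ρ) μ(a|s) ν(b|s)`. -/
def dOcc3 (γ : ℝ) (P : 𝒮 → 𝒜 → ℬ → 𝒮 → ℝ) (μ : 𝒮 → 𝒜 → ℝ) (ν : 𝒮 → ℬ → ℝ)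
    (ρ : 𝒮 → ℝ) : 𝒮 → 𝒜 → ℬ → ℝ := fun s a b =>
  dOcc γ P μ ν ρ s * μ s a * ν s b

/-- Clipped unilateral concentrability coefficient `C⋆_clipped` (in `ℝ≥0∞`;
note that in `ℝ≥0∞` one has `x/0 = ∞` for `x ≠ 0` and `0/0 = 0`, matching the
convention of the paper). -/
def clipCoeff (γ : ℝ) (P : 𝒮 → 𝒜 → ℬ → 𝒮 → ℝ) (ρ : 𝒮 → ℝ) (d : 𝒮 → 𝒜 → ℬ → ℝ)
    (μs : 𝒮 → 𝒜 → ℝ) (νs : 𝒮 → ℬ → ℝ) : ℝ≥0∞ :=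
  max
    (⨆ (μ : {μ : 𝒮 → 𝒜 → ℝ // IsPolicy μ}) (s : 𝒮) (a : 𝒜) (b : ℬ),
      ENNReal.ofReal
          (min (dOcc3 γ P μ.1 νs ρ s a b)
            ((Fintype.card 𝒮 * (Fintype.card 𝒜 + Fintype.card ℬ) : ℝ))⁻¹) /
        ENNReal.ofReal (d s a b))
    (⨆ (ν : {ν : 𝒮 → ℬ → ℝ // IsPolicy ν}) (s : 𝒮) (a : 𝒜) (b : ℬ),
      ENNReal.ofReal
          (min (dOcc3 γ P μs ν.1 ρ s a b)
            ((Fintype.card 𝒮 * (Fintype.card 𝒜 + Fintype.card ℬ) : ℝ))⁻¹) /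
        ENNReal.ofReal (d s a b))

/-- Probability weight of an individual dataset under `(d_b, P)`. -/
def dsWeight {N : ℕ} (d : 𝒮 → 𝒜 → ℬ → ℝ) (P : 𝒮 → 𝒜 → ℬ → 𝒮 → ℝ)
    (D : Fin N → 𝒮 × 𝒜 × ℬ × 𝒮) : ℝ :=
  ∏ i, d (D i).1 (D i).2.1 (D i).2.2.1 * P (D i).1 (D i).2.1 (D i).2.2.1 (D i).2.2.2

/-- Probability of an event over the offline dataset. -/
def dsProb {N : ℕ} (d : 𝒮 → 𝒜 → ℬ → ℝ) (P : 𝒮 → 𝒜 → ℬ → 𝒮 → ℝ)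
    (E : Set (Fin N → 𝒮 × 𝒜 × ℬ × 𝒮)) : ℝ :=
  ∑ D : Fin N → 𝒮 × 𝒜 × ℬ × 𝒮, E.indicator (dsWeight d P) D

/-- Expectation of a function of the offline dataset. -/
def dsExp {N : ℕ} (d : 𝒮 → 𝒜 → ℬ → ℝ) (P : 𝒮 → 𝒜 → ℬ → 𝒮 → ℝ)
    (g : (Fin N → 𝒮 × 𝒜 × ℬ × 𝒮) → ℝ) : ℝ :=
  ∑ D : Fin N → 𝒮 × 𝒜 × ℬ × 𝒮, dsWeight d P D * g D

/-- Dirac (deterministic) policy for the min-player. -/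
def diracB (f : 𝒮 → ℬ) : 𝒮 → ℬ → ℝ := fun s b => if b = f s then 1 else 0

/-- Binomial pmf. -/
def binomPMF (n : ℕ) (p : ℝ) (k : ℕ) : ℝ :=
  (n.choose k : ℝ) * p ^ k * (1 - p) ^ (n - k)

/-- Probability of a set of outcomes under a `Binomial(n,p)` distribution. -/
def binomProb (n : ℕ) (p : ℝ) (E : Set ℕ) : ℝ :=
  ∑ k ∈ Finset.range (n + 1), E.indicator (binomPMF n p) k

/-- Weight of an i.i.d. sample from a distribution on a finite set. -/
def iidWeight {𝒳 : Type} {N : ℕ} (d : 𝒳 → ℝ) (ω : Fin N → 𝒳) : ℝ := ∏ i, d (ω i)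

/-- Probability of an event for `N` i.i.d. draws from `d`. -/
def iidProb {𝒳 : Type} [Fintype 𝒳] {N : ℕ} (d : 𝒳 → ℝ) (E : Set (Fin N → 𝒳)) : ℝ :=
  ∑ ω : Fin N → 𝒳, E.indicator (iidWeight d) ω

/-- Number of occurrences of `x` in the sample `ω`. -/
def iidCount {𝒳 : Type} [DecidableEq 𝒳] {N : ℕ} (ω : Fin N → 𝒳) (x : 𝒳) : ℕ :=
  (Finset.univ.filter fun i => ω i = x).card

/-- Transition kernel of the hard instance `ℳ𝒢_θ`. -/
def hardP {S A B : ℕ} (θ : Fin A → ℝ) : Fin S → Fin A → Fin B → Fin S → ℝ :=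
  fun s a b s' =>
    if s.val = 0 ∧ b.val = 0 then
      θ a * (if s'.val = 0 then 1 else 0) + (1 - θ a) * (if s'.val = 1 then 1 else 0)
    else if s' = s then 1 else 0

/-- Reward of the hard instance: `r(s,a,b) = 1{s = 0}`. -/
def hardR {S A B : ℕ} : Fin S → Fin A → Fin B → ℝ := fun s _ _ => if s.val = 0 then 1 else 0

end ZSMG

namespace S19Proof
open ZSMG

section scalar
lemma min_sub_min_le (a b c : ℝ) (h : b ≤ a) : min a c - min b c ≤ a - b := by
  rcases min_cases a c with ⟨h1, h1'⟩ | ⟨h1, h1'⟩ <;> rcases min_cases b c with ⟨h2, h2'⟩ | ⟨h2, h2'⟩ <;>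
    rw [h1, h2] <;> linarith

lemma max_sub_max_le (a b c : ℝ) (h : b ≤ a) : max a c - max b c ≤ a - b := by
  rcases max_cases a c with ⟨h1, h1'⟩ | ⟨h1, h1'⟩ <;> rcases max_cases b c with ⟨h2, h2'⟩ | ⟨h2, h2'⟩ <;>
    rw [h1, h2] <;> linarith

lemma scalarP {c t σ1 σ2 : ℝ} (hc : 0 < c) (ht : 0 < t) (h1 : 0 ≤ σ1) (h2 : 0 ≤ σ2) :
    min (max (t * σ2) (2 * t ^ 2 * c)) c - min (max (t * σ1) (2 * t ^ 2 * c)) c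
      ≤ max (σ2 ^ 2 - σ1 ^ 2) 0 / (4 * c) := by
  have h4c : (0:ℝ) < 4 * c := by linarith
  rcases le_total σ2 σ1 with h | h
  · have hmono : min (max (t * σ2) (2 * t ^ 2 * c)) c ≤ min (max (t * σ1) (2 * t ^ 2 * c)) c := by
      apply min_le_min _ le_rfl
      apply max_le_max _ le_rfl
      nlinarith
    have hrhs : 0 ≤ max (σ2 ^ 2 - σ1 ^ 2) 0 / (4 * c) := div_nonneg (le_max_right _ _) h4c.le
    linarith
  · have hmax : max (σ2 ^ 2 - σ1 ^ 2) 0 = σ2 ^ 2 - σ1 ^ 2 := max_eq_left (by nlinarith)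
    rw [hmax, le_div_iff₀ h4c]
    rcases le_total (t * σ2) (2 * t ^ 2 * c) with h3 | h3
    · have e2 : max (t * σ2) (2 * t ^ 2 * c) = 2 * t ^ 2 * c := max_eq_right h3
      have hmono : min (max (t * σ2) (2 * t ^ 2 * c)) c ≤ min (max (t * σ1) (2 * t ^ 2 * c)) c := by
        rw [e2]; exact min_le_min (le_max_right _ _) le_rfl
      nlinarith
    · have hG : min (max (t * σ2) (2 * t ^ 2 * c)) c - min (max (t * σ1) (2 * t ^ 2 * c)) c
          ≤ max (t * σ2) (2 * t ^ 2 * c) - max (t * σ1) (2 * t ^ 2 * c) :=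
        min_sub_min_le _ _ _ (max_le_max (by nlinarith) le_rfl)
      have e2 : max (t * σ2) (2 * t ^ 2 * c) = t * σ2 := max_eq_left h3
      rcases le_total (2 * c * t) σ1 with h4 | h4
      · have hG2 : max (t * σ2) (2 * t ^ 2 * c) - max (t * σ1) (2 * t ^ 2 * c) ≤ t * σ2 - t * σ1 :=
          max_sub_max_le _ _ _ (by nlinarith)
        have hkey : (t * σ2 - t * σ1) * (4 * c) ≤ σ2 ^ 2 - σ1 ^ 2 := by
          nlinarith [mul_nonneg (sub_nonneg.mpr h) (sub_nonneg.mpr h4), sq_nonneg (σ2 - σ1)]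
        nlinarith
      · have hG2 : max (t * σ2) (2 * t ^ 2 * c) - max (t * σ1) (2 * t ^ 2 * c)
            ≤ t * σ2 - 2 * t ^ 2 * c := by
          rw [e2]; have := le_max_right (t * σ1) (2 * t ^ 2 * c); linarith
        have hσ1 : σ1 ^ 2 ≤ (2 * c * t) ^ 2 := by nlinarith
        have hkey : (t * σ2 - 2 * t ^ 2 * c) * (4 * c) ≤ σ2 ^ 2 - σ1 ^ 2 := by
          nlinarith [sq_nonneg (σ2 - 2 * c * t)]
        nlinarith

end scalar

section prob
variable {𝒮 : Type} [Fintype 𝒮]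

lemma Pexp_le {p V : 𝒮 → ℝ} {hi : ℝ} (hp0 : ∀ s, 0 ≤ p s) (hp1 : ∑ s, p s = 1)
    (h : ∀ s, V s ≤ hi) : Pexp p V ≤ hi := by
  have h1 : Pexp p V ≤ ∑ s, p s * hi :=
    Finset.sum_le_sum fun s _ => mul_le_mul_of_nonneg_left (h s) (hp0 s)
  rwa [← Finset.sum_mul, hp1, one_mul] at h1

lemma le_Pexp {p V : 𝒮 → ℝ} {lo : ℝ} (hp0 : ∀ s, 0 ≤ p s) (hp1 : ∑ s, p s = 1)
    (h : ∀ s, lo ≤ V s) : lo ≤ Pexp p V := by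
  have h1 : ∑ s, p s * lo ≤ Pexp p V :=
    Finset.sum_le_sum fun s _ => mul_le_mul_of_nonneg_left (h s) (hp0 s)
  rwa [← Finset.sum_mul, hp1, one_mul] at h1

lemma Pexp_sub_eq (p V1 V2 : 𝒮 → ℝ) :
    Pexp p V2 - Pexp p V1 = ∑ s, p s * (V2 s - V1 s) := by
  unfold Pexp
  rw [← Finset.sum_sub_distrib]
  exact Finset.sum_congr rfl fun s _ => by ring

lemma Pexp_sub_bounds {p V1 V2 : 𝒮 → ℝ} {m : ℝ} (hp0 : ∀ s, 0 ≤ p s) (hp1 : ∑ s, p s = 1)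
    (h12 : ∀ s, V1 s ≤ V2 s) (hm : ∀ s, V2 s - V1 s ≤ m) :
    0 ≤ Pexp p V2 - Pexp p V1 ∧ Pexp p V2 - Pexp p V1 ≤ m := by
  rw [Pexp_sub_eq]
  constructor
  · exact Finset.sum_nonneg fun s _ => mul_nonneg (hp0 s) (by linarith [h12 s])
  · have h1 : ∑ s, p s * (V2 s - V1 s) ≤ ∑ s, p s * m :=
      Finset.sum_le_sum fun s _ => mul_le_mul_of_nonneg_left (hm s) (hp0 s)
    rwa [← Finset.sum_mul, hp1, one_mul] at h1

lemma varP_nonneg {p V : 𝒮 → ℝ} (hp0 : ∀ s, 0 ≤ p s) (hp1 : ∑ s, p s = 1) :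
    0 ≤ varP p V := by
  have expand : ∑ s, p s * (V s - Pexp p V) ^ 2
      = (∑ s, p s * (V s * V s)) - 2 * Pexp p V * (∑ s, p s * V s)
        + (Pexp p V) ^ 2 * (∑ s, p s) := by
    rw [Finset.sum_congr rfl (fun s _ => show p s * (V s - Pexp p V) ^ 2
        = p s * (V s * V s) - 2 * Pexp p V * (p s * V s) + (Pexp p V) ^ 2 * p s from by ring)]
    rw [Finset.sum_add_distrib, Finset.sum_sub_distrib, ← Finset.mul_sum, ← Finset.mul_sum]
  have hvar : ∑ s, p s * (V s - Pexp p V) ^ 2 = varP p V := by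
    rw [expand, hp1]
    show _ = Pexp p (fun s => V s * V s) - (Pexp p V) ^ 2
    have h2 : Pexp p (fun s => V s * V s) = ∑ s, p s * (V s * V s) := rfl
    have h3 : Pexp p V = ∑ s, p s * V s := rfl
    rw [h2, ← h3]; ring
  rw [← hvar]
  exact Finset.sum_nonneg fun s _ => mul_nonneg (hp0 s) (sq_nonneg _)

lemma varP_diff_bounds {p V1 V2 : 𝒮 → ℝ} {c m : ℝ}
    (hp0 : ∀ s, 0 ≤ p s) (hp1 : ∑ s, p s = 1)
    (h0 : ∀ s, 0 ≤ V1 s) (h12 : ∀ s, V1 s ≤ V2 s) (h2c : ∀ s, V2 s ≤ c)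
    (hm : ∀ s, V2 s - V1 s ≤ m) :
    |varP p V2 - varP p V1| ≤ 2 * c * (Pexp p V2 - Pexp p V1) ∧
    |varP p V2 - varP p V1| ≤ 2 * c * (m - (Pexp p V2 - Pexp p V1)) := by
  set u := Pexp p V2 - Pexp p V1 with hu
  set wb := Pexp p V1 + Pexp p V2 with hwb
  set A := ∑ s, p s * ((V2 s - V1 s) * (V1 s + V2 s)) with hA
  set B := ∑ s, p s * ((m - (V2 s - V1 s)) * (V1 s + V2 s)) with hB
  obtain ⟨hu0, hum⟩ := Pexp_sub_bounds hp0 hp1 h12 hm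
  have hdiff : varP p V2 - varP p V1 = A - u * wb := by
    have hA' : A = (∑ s, p s * (V2 s * V2 s)) - ∑ s, p s * (V1 s * V1 s) := by
      rw [hA, ← Finset.sum_sub_distrib]
      exact Finset.sum_congr rfl fun s _ => by ring
    unfold varP Pexp
    unfold u wb
    unfold Pexp
    rw [hA']
    ring
  have hABm : A + B = m * wb := by
    rw [hA, hB, ← Finset.sum_add_distrib]
    have : ∀ s, p s * ((V2 s - V1 s) * (V1 s + V2 s))
        + p s * ((m - (V2 s - V1 s)) * (V1 s + V2 s)) = m * (p s * (V1 s + V2 s)) := by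
      intro s; ring
    rw [Finset.sum_congr rfl fun s _ => this s, ← Finset.mul_sum]
    congr 1
    unfold wb
    unfold Pexp
    rw [← Finset.sum_add_distrib]
    exact (Finset.sum_congr rfl fun s _ => by ring).symm
  have hA0 : 0 ≤ A :=
    Finset.sum_nonneg fun s _ => mul_nonneg (hp0 s)
      (mul_nonneg (by linarith [h12 s]) (by linarith [h0 s, h12 s]))
  have hA2 : A ≤ 2 * c * u := by
    have h1 : A ≤ ∑ s, p s * ((V2 s - V1 s) * (2 * c)) := by
      apply Finset.sum_le_sum
      intro s _
      apply mul_le_mul_of_nonneg_left _ (hp0 s)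
      apply mul_le_mul_of_nonneg_left _ (by linarith [h12 s])
      have := h0 s; have := h12 s; have := h2c s; linarith
    have h2 : ∑ s, p s * ((V2 s - V1 s) * (2 * c)) = 2 * c * u := by
      rw [hu, Pexp_sub_eq, Finset.mul_sum]
      exact Finset.sum_congr rfl fun s _ => by ring
    linarith
  have hB0 : 0 ≤ B := by
    apply Finset.sum_nonneg
    intro s _
    exact mul_nonneg (hp0 s) (mul_nonneg (by linarith [hm s]) (by linarith [h0 s, h12 s]))
  have hB2 : B ≤ 2 * c * (m - u) := by
    have h1 : B ≤ ∑ s, p s * ((m - (V2 s - V1 s)) * (2 * c)) := by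
      apply Finset.sum_le_sum
      intro s _
      apply mul_le_mul_of_nonneg_left _ (hp0 s)
      apply mul_le_mul_of_nonneg_left _ (by linarith [hm s])
      have := h0 s; have := h12 s; have := h2c s; linarith
    have h2 : ∑ s, p s * ((m - (V2 s - V1 s)) * (2 * c)) = 2 * c * (m - u) := by
      have e : ∀ s : 𝒮, p s * ((m - (V2 s - V1 s)) * (2 * c))
          = 2 * c * (p s * m) - 2 * c * (p s * (V2 s - V1 s)) := fun s => by ring
      rw [Finset.sum_congr rfl fun s _ => e s, Finset.sum_sub_distrib, ← Finset.mul_sum,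
        ← Finset.mul_sum, ← Finset.sum_mul, hp1, hu, Pexp_sub_eq]
      ring
    linarith
  have hw0 : 0 ≤ wb := by
    have := le_Pexp hp0 hp1 h0
    have := le_Pexp hp0 hp1 (fun s => le_trans (h0 s) (h12 s))
    unfold wb; linarith
  have hw2 : wb ≤ 2 * c := by
    have h1 := Pexp_le hp0 hp1 (fun s => le_trans (h12 s) (h2c s))
    have h2 := Pexp_le hp0 hp1 h2c
    unfold wb; linarith
  have key1 : u * wb ≤ u * (2 * c) := mul_le_mul_of_nonneg_left hw2 hu0
  have key2 : (m - u) * wb ≤ (m - u) * (2 * c) := mul_le_mul_of_nonneg_left hw2 (by linarith)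
  have hu0w : 0 ≤ u * wb := mul_nonneg hu0 hw0
  have hmu0w : 0 ≤ (m - u) * wb := mul_nonneg (by linarith) hw0
  constructor
  · rw [abs_le]; constructor <;> [skip; skip] <;> nlinarith
  · rw [abs_le]; constructor <;> nlinarith
end prob

section game
variable {𝒮 𝒜 ℬ : Type} [Fintype 𝒮] [Fintype 𝒜] [Fintype ℬ] [Nonempty 𝒜] [Nonempty ℬ]

instance instSimplexNonempty {ι : Type} [Fintype ι] [Nonempty ι] : Nonempty (stdSimplex ℝ ι) := by
  classical
  exact ⟨⟨Pi.single (Classical.arbitrary ι) 1, single_mem_stdSimplex ℝ _⟩⟩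

lemma pay_le_pay_add {M1 M2 : 𝒜 → ℬ → ℝ} {k : ℝ} {w : 𝒜 → ℝ} {z : ℬ → ℝ}
    (hw : w ∈ stdSimplex ℝ 𝒜) (hz : z ∈ stdSimplex ℝ ℬ)
    (h : ∀ a b, M1 a b ≤ M2 a b + k) : pay M1 w z ≤ pay M2 w z + k := by
  have step1 : pay M1 w z ≤ ∑ a, ∑ b, w a * z b * (M2 a b + k) :=
    Finset.sum_le_sum fun a _ => Finset.sum_le_sum fun b _ =>
      mul_le_mul_of_nonneg_left (h a b) (mul_nonneg (hw.1 a) (hz.1 b))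
  have inner : ∀ a : 𝒜, ∑ b, w a * z b * (M2 a b + k)
      = (∑ b, w a * z b * M2 a b) + w a * k := by
    intro a
    calc ∑ b, w a * z b * (M2 a b + k)
        = (∑ b, w a * z b * M2 a b) + (∑ b, z b) * (w a * k) := by
          rw [Finset.sum_mul, ← Finset.sum_add_distrib]
          exact Finset.sum_congr rfl fun b _ => by ring
      _ = (∑ b, w a * z b * M2 a b) + w a * k := by rw [hz.2, one_mul]
  have step2 : ∑ a, ∑ b, w a * z b * (M2 a b + k) = pay M2 w z + k := by
    calc ∑ a, ∑ b, w a * z b * (M2 a b + k)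
        = ∑ a, ((∑ b, w a * z b * M2 a b) + w a * k) :=
          Finset.sum_congr rfl fun a _ => inner a
      _ = (∑ a, ∑ b, w a * z b * M2 a b) + (∑ a, w a) * k := by
          rw [Finset.sum_add_distrib, Finset.sum_mul]
      _ = pay M2 w z + k := by rw [hw.2, one_mul]; rfl
  linarith

lemma pay_zero (w : 𝒜 → ℝ) (z : ℬ → ℝ) : pay (fun _ _ => (0:ℝ)) w z = 0 := by
  simp [pay]

lemma pay_le {M : 𝒜 → ℬ → ℝ} {hi : ℝ} {w : 𝒜 → ℝ} {z : ℬ → ℝ}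
    (hw : w ∈ stdSimplex ℝ 𝒜) (hz : z ∈ stdSimplex ℝ ℬ)
    (h : ∀ a b, M a b ≤ hi) : pay M w z ≤ hi := by
  have := pay_le_pay_add (M2 := fun _ _ => (0:ℝ)) (k := hi) hw hz
    (fun a b => by simpa using h a b)
  rw [pay_zero] at this; linarith

lemma le_pay {M : 𝒜 → ℬ → ℝ} {lo : ℝ} {w : 𝒜 → ℝ} {z : ℬ → ℝ}
    (hw : w ∈ stdSimplex ℝ 𝒜) (hz : z ∈ stdSimplex ℝ ℬ)
    (h : ∀ a b, lo ≤ M a b) : lo ≤ pay M w z := by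
  have := pay_le_pay_add (M1 := fun _ _ => (0:ℝ)) (M2 := M) (k := -lo) hw hz
    (fun a b => show (0:ℝ) ≤ M a b + -lo by linarith [h a b])
  rw [pay_zero] at this; linarith

lemma bddBelow_payrange {M : 𝒜 → ℬ → ℝ} {lo hi : ℝ} (hM : ∀ a b, M a b ∈ Set.Icc lo hi)
    (w : stdSimplex ℝ 𝒜) :
    BddBelow (Set.range fun z : stdSimplex ℝ ℬ => pay M w.1 z.1) :=
  ⟨lo, fun y hy => by obtain ⟨z, rfl⟩ := hy; exact le_pay w.2 z.2 fun a b => (hM a b).1⟩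

lemma inner_le {M : 𝒜 → ℬ → ℝ} {lo hi : ℝ} (hM : ∀ a b, M a b ∈ Set.Icc lo hi)
    (w : stdSimplex ℝ 𝒜) : (⨅ z : stdSimplex ℝ ℬ, pay M w.1 z.1) ≤ hi := by
  refine le_trans (ciInf_le (bddBelow_payrange hM w) (Classical.arbitrary _)) ?_
  exact pay_le w.2 (Classical.arbitrary (stdSimplex ℝ ℬ)).2 fun a b => (hM a b).2

lemma bddAbove_mvalrange {M : 𝒜 → ℬ → ℝ} {lo hi : ℝ} (hM : ∀ a b, M a b ∈ Set.Icc lo hi) :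
    BddAbove (Set.range fun w : stdSimplex ℝ 𝒜 => ⨅ z : stdSimplex ℝ ℬ, pay M w.1 z.1) :=
  ⟨hi, fun y hy => by obtain ⟨w, rfl⟩ := hy; exact inner_le hM w⟩

lemma valQ_mem {Q : 𝒮 → 𝒜 → ℬ → ℝ} {lo hi : ℝ}
    (hQ : ∀ s a b, Q s a b ∈ Set.Icc lo hi) (s : 𝒮) : valQ Q s ∈ Set.Icc lo hi := by
  have hM : ∀ a b, Q s a b ∈ Set.Icc lo hi := fun a b => hQ s a b
  constructor
  · refine le_trans ?_ (le_ciSup (bddAbove_mvalrange hM) (Classical.arbitrary (stdSimplex ℝ 𝒜)))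
    exact le_ciInf fun z => le_pay (Classical.arbitrary (stdSimplex ℝ 𝒜)).2 z.2
      fun a b => (hM a b).1
  · exact ciSup_le fun w => inner_le hM w

lemma valQ_le_add {Q1 Q2 : 𝒮 → 𝒜 → ℬ → ℝ} {lo hi lo' hi' k : ℝ}
    (h1 : ∀ s a b, Q1 s a b ∈ Set.Icc lo hi) (h2 : ∀ s a b, Q2 s a b ∈ Set.Icc lo' hi')
    (h : ∀ s a b, Q1 s a b ≤ Q2 s a b + k) (s : 𝒮) : valQ Q1 s ≤ valQ Q2 s + k := by
  show (⨆ w : stdSimplex ℝ 𝒜, ⨅ z : stdSimplex ℝ ℬ, pay (Q1 s) w.1 z.1)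
      ≤ (⨆ w : stdSimplex ℝ 𝒜, ⨅ z : stdSimplex ℝ ℬ, pay (Q2 s) w.1 z.1) + k
  apply ciSup_le; intro w
  have key : (⨅ z : stdSimplex ℝ ℬ, pay (Q1 s) w.1 z.1)
      ≤ (⨅ z : stdSimplex ℝ ℬ, pay (Q2 s) w.1 z.1) + k := by
    rw [← sub_le_iff_le_add]
    apply le_ciInf; intro z
    have h3 := ciInf_le (bddBelow_payrange (fun a b => h1 s a b) w) z
    have h4 := pay_le_pay_add w.2 z.2 (fun a b => h s a b)
    linarith
  have h5 := le_ciSup (bddAbove_mvalrange (fun a b => h2 s a b)) w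
  linarith

end game

section pen
variable {𝒮 : Type} [Fintype 𝒮]

lemma penalty_pair {γ δ Cb : ℝ} {N : ℕ} (n : ℕ) {p V1 V2 : 𝒮 → ℝ}
    (hγl : 1 / 2 ≤ γ) (hγu : γ < 1) (hδ0 : 0 < δ) (hδ1 : δ < 1) (hCb : 1 ≤ Cb) (hN : 1 ≤ N)
    (hp0 : ∀ s, 0 ≤ p s) (hp1 : ∑ s, p s = 1)
    (h0 : ∀ s, 0 ≤ V1 s) (h12 : ∀ s, V1 s ≤ V2 s) (h2c : ∀ s, V2 s ≤ 1 / (1 - γ))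
    {m : ℝ} (hm : ∀ s, V2 s - V1 s ≤ m) :
    |penalty γ δ Cb N n p V2 - penalty γ δ Cb N n p V1|
      ≤ γ * (Pexp p V2 - Pexp p V1) ∧
    |penalty γ δ Cb N n p V2 - penalty γ δ Cb N n p V1|
      ≤ γ * (m - (Pexp p V2 - Pexp p V1)) := by
  have h1γ : 0 < 1 - γ := by linarith
  have hγ0 : 0 < γ := by linarith
  obtain ⟨hu0, hum⟩ := Pexp_sub_bounds hp0 hp1 h12 hm
  rcases Nat.eq_zero_or_pos n with hn | hn
  · subst hn
    have he : penalty γ δ Cb N 0 p V2 = penalty γ δ Cb N 0 p V1 := by simp [penalty]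
    rw [he, sub_self, abs_zero]
    exact ⟨mul_nonneg hγ0.le hu0, mul_nonneg hγ0.le (by linarith)⟩
  · have hn0 : n ≠ 0 := hn.ne'
    have hnR : (0:ℝ) < (n : ℝ) := by exact_mod_cast hn
    have hNR : (1:ℝ) ≤ (N : ℝ) := by exact_mod_cast hN
    set c : ℝ := 1 / (1 - γ) with hc
    have hc0 : 0 < c := by positivity
    set L : ℝ := Real.log ((N : ℝ) / ((1 - γ) * δ)) with hL
    have hd0 : 0 < (1 - γ) * δ := mul_pos h1γ hδ0
    have hd1 : (1 - γ) * δ < 1 := by nlinarith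
    have hL0 : 0 < L := Real.log_pos (by rw [lt_div_iff₀ hd0]; nlinarith)
    have hK0 : 0 < Cb * L := mul_pos (by linarith) hL0
    set t : ℝ := Real.sqrt (Cb * L / (n : ℝ)) with htdef
    have hx0 : 0 < Cb * L / (n : ℝ) := div_pos hK0 hnR
    have ht : 0 < t := Real.sqrt_pos.mpr hx0
    have ht2 : t ^ 2 = Cb * L / (n : ℝ) := Real.sq_sqrt hx0.le
    have hv1 : 0 ≤ varP p V1 := varP_nonneg hp0 hp1
    have hv2 : 0 ≤ varP p V2 := varP_nonneg hp0 hp1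
    have hpen : ∀ V : 𝒮 → ℝ, 0 ≤ varP p V → penalty γ δ Cb N n p V
        = min (max (t * Real.sqrt (varP p V)) (2 * t ^ 2 * c)) c + 4 / (N : ℝ) := by
      intro V hV
      simp only [penalty, if_neg hn0]
      have e1 : Real.sqrt (Cb * L * varP p V / (n : ℝ)) = t * Real.sqrt (varP p V) := by
        rw [show Cb * L * varP p V / (n : ℝ) = (Cb * L / (n : ℝ)) * varP p V from by ring,
          Real.sqrt_mul hx0.le]
      have e2 : 2 * Cb * L / ((1 - γ) * (n : ℝ)) = 2 * t ^ 2 * c := by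
        rw [ht2, hc]
        field_simp
      rw [← hL, e1, e2, hc]
    rw [hpen V1 hv1, hpen V2 hv2]
    have hcancel : min (max (t * Real.sqrt (varP p V2)) (2 * t ^ 2 * c)) c + 4 / (N : ℝ)
        - (min (max (t * Real.sqrt (varP p V1)) (2 * t ^ 2 * c)) c + 4 / (N : ℝ))
        = min (max (t * Real.sqrt (varP p V2)) (2 * t ^ 2 * c)) c
          - min (max (t * Real.sqrt (varP p V1)) (2 * t ^ 2 * c)) c := by ring
    rw [hcancel]
    have hs1 : Real.sqrt (varP p V1) ^ 2 = varP p V1 := Real.sq_sqrt hv1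
    have hs2 : Real.sqrt (varP p V2) ^ 2 = varP p V2 := Real.sq_sqrt hv2
    have hd12 := scalarP (σ1 := Real.sqrt (varP p V1)) (σ2 := Real.sqrt (varP p V2))
      hc0 ht (Real.sqrt_nonneg _) (Real.sqrt_nonneg _)
    have hd21 := scalarP (σ1 := Real.sqrt (varP p V2)) (σ2 := Real.sqrt (varP p V1))
      hc0 ht (Real.sqrt_nonneg _) (Real.sqrt_nonneg _)
    rw [hs1, hs2] at hd12 hd21
    obtain ⟨hvb1, hvb2⟩ := varP_diff_bounds hp0 hp1 h0 h12 h2c hm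
    have hmax1 : max (varP p V2 - varP p V1) 0 ≤ |varP p V2 - varP p V1| :=
      max_le (le_abs_self _) (abs_nonneg _)
    have hmax2 : max (varP p V1 - varP p V2) 0 ≤ |varP p V2 - varP p V1| := by
      rw [abs_sub_comm]
      exact max_le (le_abs_self _) (abs_nonneg _)
    have h4c : (0:ℝ) < 4 * c := by linarith
    have bound : ∀ x r : ℝ, 0 ≤ r → x ≤ |varP p V2 - varP p V1| →
        |varP p V2 - varP p V1| ≤ 2 * c * r → x / (4 * c) ≤ γ * r := by
      intro x r hr hx1 hx2
      rw [div_le_iff₀ h4c]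
      nlinarith [mul_nonneg (mul_nonneg (show (0:ℝ) ≤ 4 * γ - 2 by linarith) hc0.le) hr]
    have k1 := bound _ _ hu0 hmax1 hvb1
    have k1' := bound _ _ hu0 hmax2 hvb1
    have k2 := bound _ _ (show (0:ℝ) ≤ m - (Pexp p V2 - Pexp p V1) by linarith) hmax1 hvb2
    have k2' := bound _ _ (show (0:ℝ) ≤ m - (Pexp p V2 - Pexp p V1) by linarith) hmax2 hvb2
    constructor
    · rw [abs_sub_le_iff]
      exact ⟨le_trans hd12 k1, le_trans hd21 k1'⟩
    · rw [abs_sub_le_iff]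
      exact ⟨le_trans hd12 k2, le_trans hd21 k2'⟩
end pen

section opsec
variable {𝒮 𝒜 ℬ : Type} [Fintype 𝒮] [Fintype 𝒜] [Fintype ℬ] [Nonempty 𝒮] [Nonempty 𝒜] [Nonempty ℬ]

lemma penalty_nonneg {γ δ Cb : ℝ} {N n : ℕ} {p V : 𝒮 → ℝ} (hγu : γ < 1) (hN : 1 ≤ N) :
    0 ≤ penalty γ δ Cb N n p V := by
  have h1γ : 0 < 1 - γ := by linarith
  have h1 : (0:ℝ) ≤ 1 / (1 - γ) := by positivity
  have h2 : (0:ℝ) ≤ 4 / (N : ℝ) := by positivity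
  unfold penalty
  split_ifs with h
  · linarith
  · have h3 : (0:ℝ) ≤ min (max (Real.sqrt (Cb * Real.log ((N : ℝ) / ((1 - γ) * δ)) * varP p V / (n : ℝ)))
        (2 * Cb * Real.log ((N : ℝ) / ((1 - γ) * δ)) / ((1 - γ) * (n : ℝ)))) (1 / (1 - γ)) :=
      le_min (le_trans (Real.sqrt_nonneg _) (le_max_left _ _)) h1
    linarith

section ops
variable {γ δ Cb : ℝ} {N : ℕ} {n : 𝒮 → 𝒜 → ℬ → ℕ} {Ph : 𝒮 → 𝒜 → ℬ → 𝒮 → ℝ}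
  {rh : 𝒮 → 𝒜 → ℬ → ℝ}

lemma TpeMinus_box (hγl : 1 / 2 ≤ γ) (hγu : γ < 1) (hN : 1 ≤ N)
    (hPh : IsKernel Ph) (hrh : IsReward rh) {Q : 𝒮 → 𝒜 → ℬ → ℝ}
    (hQ : ∀ s a b, Q s a b ∈ Set.Icc 0 (1 / (1 - γ))) :
    ∀ s a b, TpeMinus γ δ Cb N n Ph rh Q s a b ∈ Set.Icc 0 (1 / (1 - γ)) := by
  intro s a b
  have h1γ : 0 < 1 - γ := by linarith
  have hγ0 : 0 < γ := by linarith
  have hc0 : (0:ℝ) ≤ 1 / (1 - γ) := by positivity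
  refine ⟨le_max_right _ _, ?_⟩
  apply max_le _ hc0
  have hP : Pexp (Ph s a b) (valQ Q) ≤ 1 / (1 - γ) :=
    Pexp_le (hPh s a b).1 (hPh s a b).2 fun s' => (valQ_mem hQ s').2
  have hpen : 0 ≤ penalty γ δ Cb N (n s a b) (Ph s a b) (valQ Q) := penalty_nonneg hγu hN
  have hr := (hrh s a b).2
  have hid : 1 + γ * (1 / (1 - γ)) = 1 / (1 - γ) := by field_simp; ring
  nlinarith [mul_le_mul_of_nonneg_left hP hγ0.le]

lemma TpePlus_box (hγl : 1 / 2 ≤ γ) (hγu : γ < 1) (hN : 1 ≤ N)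
    (hPh : IsKernel Ph) (hrh : IsReward rh) {Q : 𝒮 → 𝒜 → ℬ → ℝ}
    (hQ : ∀ s a b, Q s a b ∈ Set.Icc 0 (1 / (1 - γ))) :
    ∀ s a b, TpePlus γ δ Cb N n Ph rh Q s a b ∈ Set.Icc 0 (1 / (1 - γ)) := by
  intro s a b
  have h1γ : 0 < 1 - γ := by linarith
  have hγ0 : 0 < γ := by linarith
  have hc0 : (0:ℝ) ≤ 1 / (1 - γ) := by positivity
  refine ⟨?_, min_le_right _ _⟩
  apply le_min _ hc0
  have hP : 0 ≤ Pexp (Ph s a b) (valQ Q) :=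
    le_Pexp (hPh s a b).1 (hPh s a b).2 fun s' => (valQ_mem hQ s').1
  have hpen : 0 ≤ penalty γ δ Cb N (n s a b) (Ph s a b) (valQ Q) := penalty_nonneg hγu hN
  have hr := (hrh s a b).1
  nlinarith

lemma TpeMinus_pair (hγl : 1 / 2 ≤ γ) (hγu : γ < 1) (hδ0 : 0 < δ) (hδ1 : δ < 1)
    (hCb : 1 ≤ Cb) (hN : 1 ≤ N) (hPh : IsKernel Ph) (hrh : IsReward rh)
    {Q1 Q2 : 𝒮 → 𝒜 → ℬ → ℝ}
    (hQ1 : ∀ s a b, Q1 s a b ∈ Set.Icc 0 (1 / (1 - γ)))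
    (hQ2 : ∀ s a b, Q2 s a b ∈ Set.Icc 0 (1 / (1 - γ)))
    (h12 : ∀ s a b, Q1 s a b ≤ Q2 s a b)
    {m : ℝ} (hm : ∀ s a b, Q2 s a b - Q1 s a b ≤ m) :
    ∀ s a b, TpeMinus γ δ Cb N n Ph rh Q1 s a b ≤ TpeMinus γ δ Cb N n Ph rh Q2 s a b ∧
      TpeMinus γ δ Cb N n Ph rh Q2 s a b - TpeMinus γ δ Cb N n Ph rh Q1 s a b ≤ γ * m := by
  have hγ0 : 0 < γ := by linarith
  have hV1mem : ∀ s', valQ Q1 s' ∈ Set.Icc 0 (1 / (1 - γ)) := valQ_mem hQ1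
  have hV2mem : ∀ s', valQ Q2 s' ∈ Set.Icc 0 (1 / (1 - γ)) := valQ_mem hQ2
  have hV12 : ∀ s', valQ Q1 s' ≤ valQ Q2 s' := by
    intro s'
    have := valQ_le_add hQ1 hQ2 (k := 0) (fun s a b => by linarith [h12 s a b]) s'
    linarith
  have hVm : ∀ s', valQ Q2 s' - valQ Q1 s' ≤ m := by
    intro s'
    have := valQ_le_add hQ2 hQ1 (k := m) (fun s a b => by linarith [hm s a b]) s'
    linarith
  intro s a b
  have hp0 := (hPh s a b).1
  have hp1 := (hPh s a b).2
  obtain ⟨hpd1, hpd2⟩ := penalty_pair (n s a b) hγl hγu hδ0 hδ1 hCb hN hp0 hp1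
    (fun s' => (hV1mem s').1) hV12 (fun s' => (hV2mem s').2) hVm
  obtain ⟨hu0, hum⟩ := Pexp_sub_bounds (p := Ph s a b) hp0 hp1 hV12 hVm
  rw [abs_le] at hpd1 hpd2
  unfold TpeMinus
  constructor
  · apply max_le_max _ le_rfl
    nlinarith [hpd1.2]
  · have hb : rh s a b + γ * Pexp (Ph s a b) (valQ Q1)
        - penalty γ δ Cb N (n s a b) (Ph s a b) (valQ Q1)
        ≤ rh s a b + γ * Pexp (Ph s a b) (valQ Q2)
        - penalty γ δ Cb N (n s a b) (Ph s a b) (valQ Q2) := by nlinarith [hpd1.2]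
    have h1 := max_sub_max_le (rh s a b + γ * Pexp (Ph s a b) (valQ Q2)
        - penalty γ δ Cb N (n s a b) (Ph s a b) (valQ Q2))
      (rh s a b + γ * Pexp (Ph s a b) (valQ Q1)
        - penalty γ δ Cb N (n s a b) (Ph s a b) (valQ Q1)) 0 hb
    nlinarith [hpd2.1]

lemma TpePlus_pair (hγl : 1 / 2 ≤ γ) (hγu : γ < 1) (hδ0 : 0 < δ) (hδ1 : δ < 1)
    (hCb : 1 ≤ Cb) (hN : 1 ≤ N) (hPh : IsKernel Ph) (hrh : IsReward rh)
    {Q1 Q2 : 𝒮 → 𝒜 → ℬ → ℝ}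
    (hQ1 : ∀ s a b, Q1 s a b ∈ Set.Icc 0 (1 / (1 - γ)))
    (hQ2 : ∀ s a b, Q2 s a b ∈ Set.Icc 0 (1 / (1 - γ)))
    (h12 : ∀ s a b, Q1 s a b ≤ Q2 s a b)
    {m : ℝ} (hm : ∀ s a b, Q2 s a b - Q1 s a b ≤ m) :
    ∀ s a b, TpePlus γ δ Cb N n Ph rh Q1 s a b ≤ TpePlus γ δ Cb N n Ph rh Q2 s a b ∧
      TpePlus γ δ Cb N n Ph rh Q2 s a b - TpePlus γ δ Cb N n Ph rh Q1 s a b ≤ γ * m := by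
  have hγ0 : 0 < γ := by linarith
  have hV1mem : ∀ s', valQ Q1 s' ∈ Set.Icc 0 (1 / (1 - γ)) := valQ_mem hQ1
  have hV2mem : ∀ s', valQ Q2 s' ∈ Set.Icc 0 (1 / (1 - γ)) := valQ_mem hQ2
  have hV12 : ∀ s', valQ Q1 s' ≤ valQ Q2 s' := by
    intro s'
    have := valQ_le_add hQ1 hQ2 (k := 0) (fun s a b => by linarith [h12 s a b]) s'
    linarith
  have hVm : ∀ s', valQ Q2 s' - valQ Q1 s' ≤ m := by
    intro s'
    have := valQ_le_add hQ2 hQ1 (k := m) (fun s a b => by linarith [hm s a b]) s'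
    linarith
  intro s a b
  have hp0 := (hPh s a b).1
  have hp1 := (hPh s a b).2
  obtain ⟨hpd1, hpd2⟩ := penalty_pair (n s a b) hγl hγu hδ0 hδ1 hCb hN hp0 hp1
    (fun s' => (hV1mem s').1) hV12 (fun s' => (hV2mem s').2) hVm
  obtain ⟨hu0, hum⟩ := Pexp_sub_bounds (p := Ph s a b) hp0 hp1 hV12 hVm
  rw [abs_le] at hpd1 hpd2
  unfold TpePlus
  constructor
  · apply min_le_min _ le_rfl
    nlinarith [hpd1.1]
  · have hb : rh s a b + γ * Pexp (Ph s a b) (valQ Q1)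
        + penalty γ δ Cb N (n s a b) (Ph s a b) (valQ Q1)
        ≤ rh s a b + γ * Pexp (Ph s a b) (valQ Q2)
        + penalty γ δ Cb N (n s a b) (Ph s a b) (valQ Q2) := by nlinarith [hpd1.1]
    have h1 := min_sub_min_le (rh s a b + γ * Pexp (Ph s a b) (valQ Q2)
        + penalty γ δ Cb N (n s a b) (Ph s a b) (valQ Q2))
      (rh s a b + γ * Pexp (Ph s a b) (valQ Q1)
        + penalty γ δ Cb N (n s a b) (Ph s a b) (valQ Q1)) (1 / (1 - γ)) hb
    nlinarith [hpd2.2]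
end ops
end opsec

section norms
variable {𝒮 𝒜 ℬ : Type} [Fintype 𝒮] [Fintype 𝒜] [Fintype ℬ] [Nonempty 𝒮] [Nonempty 𝒜] [Nonempty ℬ]

lemma supNormQ_le {f : 𝒮 → 𝒜 → ℬ → ℝ} {K : ℝ} (h : ∀ s a b, |f s a b| ≤ K) :
    supNormQ f ≤ K :=
  ciSup_le fun s => ciSup_le fun a => ciSup_le fun b => h s a b

lemma supNormS_le {f : 𝒮 → ℝ} {K : ℝ} (h : ∀ s, |f s| ≤ K) : supNormS f ≤ K :=
  ciSup_le h

end norms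

lemma titer_bound {γ : ℝ} (hγl : 1 / 2 ≤ γ) (hγu : γ < 1) {N : ℕ} (hN : 1 ≤ N) :
    γ ^ Titer γ N / (1 - γ) ≤ 1 / (N : ℝ) := by
  have hγ0 : 0 < γ := by linarith
  have h1γ : 0 < 1 - γ := by linarith
  have hNR : (1:ℝ) ≤ (N : ℝ) := by exact_mod_cast hN
  have hNR0 : (0:ℝ) < (N : ℝ) := by linarith
  have hlogpos : 0 < Real.log (1 / γ) := Real.log_pos (by rw [lt_div_iff₀ hγ0]; linarith)
  have hceil : Real.log ((N : ℝ) / (1 - γ)) / Real.log (1 / γ) ≤ (Titer γ N : ℝ) :=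
    Nat.le_ceil _
  have h1 : Real.log ((N : ℝ) / (1 - γ)) ≤ (Titer γ N : ℝ) * Real.log (1 / γ) := by
    rw [div_le_iff₀ hlogpos] at hceil; exact hceil
  have hTlog : Real.log (γ ^ Titer γ N) ≤ Real.log ((1 - γ) / (N : ℝ)) := by
    rw [Real.log_pow]
    have e1 : Real.log (1 / γ) = -Real.log γ := by rw [one_div, Real.log_inv]
    have e2 : Real.log ((1 - γ) / (N : ℝ)) = -Real.log ((N : ℝ) / (1 - γ)) := by
      rw [← Real.log_inv]; congr 1; rw [inv_div]
    rw [e2]; rw [e1] at h1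
    have e3 : (Titer γ N : ℝ) * Real.log γ = -((Titer γ N : ℝ) * -Real.log γ) := by ring
    rw [e3]
    linarith
  have hpow : γ ^ Titer γ N ≤ (1 - γ) / (N : ℝ) := by
    have h2 : (0:ℝ) < γ ^ Titer γ N := pow_pos hγ0 _
    have h3 : (0:ℝ) < (1 - γ) / (N : ℝ) := by positivity
    calc γ ^ Titer γ N = Real.exp (Real.log (γ ^ Titer γ N)) := (Real.exp_log h2).symm
      _ ≤ Real.exp (Real.log ((1 - γ) / (N : ℝ))) := Real.exp_le_exp.mpr hTlog
      _ = (1 - γ) / (N : ℝ) := Real.exp_log h3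
  have h4 : γ ^ Titer γ N / (1 - γ) ≤ ((1 - γ) / (N : ℝ)) / (1 - γ) := by gcongr
  have h5 : ((1 - γ) / (N : ℝ)) / (1 - γ) = 1 / (N : ℝ) := by
    field_simp
  linarith

end S19Proof




open ZSMG in
/-- the VI-LCB-Game iterates approach the fixed points of the
pessimistic Bellman operators monotonically from below/above, and after
`T = ⌈log(N/(1−γ))/log(1/γ)⌉` iterations are within `γ^T/(1−γ) ≤ 1/N`. -/
theorem statement19 {𝒮 𝒜 ℬ : Type} [Fintype 𝒮] [Fintype 𝒜] [Fintype ℬ]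
    [Nonempty 𝒮] [Nonempty 𝒜] [Nonempty ℬ]
    (γ δ Cb : ℝ) (hγl : 1 / 2 ≤ γ) (hγu : γ < 1) (hδ : δ ∈ Set.Ioo (0 : ℝ) 1)
    (hCb : 1 ≤ Cb) (N : ℕ) (hN : 1 ≤ N)
    (n : 𝒮 → 𝒜 → ℬ → ℕ) (Ph : 𝒮 → 𝒜 → ℬ → 𝒮 → ℝ) (hPh : IsKernel Ph)
    (rh : 𝒮 → 𝒜 → ℬ → ℝ) (hrh : IsReward rh)
    (Qm Qp : 𝒮 → 𝒜 → ℬ → ℝ)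
    (hQm : (∀ s a b, Qm s a b ∈ Set.Icc (0 : ℝ) (1 / (1 - γ))) ∧
      TpeMinus γ δ Cb N n Ph rh Qm = Qm)
    (hQp : (∀ s a b, Qp s a b ∈ Set.Icc (0 : ℝ) (1 / (1 - γ))) ∧
      TpePlus γ δ Cb N n Ph rh Qp = Qp) :
    (∀ t : ℕ, ∀ s a b,
      (TpeMinus γ δ Cb N n Ph rh)^[t] (fun _ _ _ => 0) s a b ≤ Qm s a b) ∧
    (∀ t : ℕ, ∀ s a b,
      Qp s a b ≤ (TpePlus γ δ Cb N n Ph rh)^[t] (fun _ _ _ => 1 / (1 - γ)) s a b) ∧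
    supNormQ (fun s a b =>
        (TpeMinus γ δ Cb N n Ph rh)^[Titer γ N] (fun _ _ _ => 0) s a b - Qm s a b)
      ≤ γ ^ Titer γ N / (1 - γ) ∧
    supNormQ (fun s a b =>
        (TpePlus γ δ Cb N n Ph rh)^[Titer γ N] (fun _ _ _ => 1 / (1 - γ)) s a b - Qp s a b)
      ≤ γ ^ Titer γ N / (1 - γ) ∧
    γ ^ Titer γ N / (1 - γ) ≤ 1 / (N : ℝ) ∧
    supNormS (fun s =>
        valQ ((TpeMinus γ δ Cb N n Ph rh)^[Titer γ N] (fun _ _ _ => 0)) s - valQ Qm s)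
      ≤ 1 / (N : ℝ) ∧
    supNormS (fun s =>
        valQ ((TpePlus γ δ Cb N n Ph rh)^[Titer γ N] (fun _ _ _ => 1 / (1 - γ))) s - valQ Qp s)
      ≤ 1 / (N : ℝ) := by
  classical
  obtain ⟨hQmbox, hQmfix⟩ := hQm
  obtain ⟨hQpbox, hQpfix⟩ := hQp
  obtain ⟨hδ0, hδ1⟩ := hδ
  have h1γ : 0 < 1 - γ := by linarith
  have hγ0 : 0 < γ := by linarith
  have hc0 : (0:ℝ) ≤ 1 / (1 - γ) := by positivity
  have hNR0 : (0:ℝ) < (N : ℝ) := by exact_mod_cast hN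
  have hfixM : ∀ s a b, TpeMinus γ δ Cb N n Ph rh Qm s a b = Qm s a b := by
    intro s a b; rw [hQmfix]
  have hfixP : ∀ s a b, TpePlus γ δ Cb N n Ph rh Qp s a b = Qp s a b := by
    intro s a b; rw [hQpfix]
  have hiterM : ∀ t : ℕ,
      (∀ s a b, (TpeMinus γ δ Cb N n Ph rh)^[t] (fun _ _ _ => 0) s a b
        ∈ Set.Icc 0 (1 / (1 - γ))) ∧
      (∀ s a b, (TpeMinus γ δ Cb N n Ph rh)^[t] (fun _ _ _ => 0) s a b ≤ Qm s a b) ∧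
      (∀ s a b, Qm s a b - (TpeMinus γ δ Cb N n Ph rh)^[t] (fun _ _ _ => 0) s a b
        ≤ γ ^ t * (1 / (1 - γ))) := by
    intro t
    induction t with
    | zero =>
      refine ⟨?_, ?_, ?_⟩
      · intro s a b; simp only [Function.iterate_zero, id_eq]; exact ⟨le_rfl, hc0⟩
      · intro s a b; simpa using (hQmbox s a b).1
      · intro s a b
        simp only [Function.iterate_zero, id_eq, pow_zero, one_mul]
        linarith [(hQmbox s a b).2]
    | succ t ih =>
      obtain ⟨ihbox, ihle, ihdist⟩ := ih
      have hpair := S19Proof.TpeMinus_pair (n := n) hγl hγu hδ0 hδ1 hCb hN hPh hrh ihbox hQmbox ihle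
        (m := γ ^ t * (1 / (1 - γ))) (fun s a b => ihdist s a b)
      have hbox := S19Proof.TpeMinus_box (n := n) (δ := δ) (Cb := Cb) hγl hγu hN hPh hrh ihbox
      have hmul : γ * (γ ^ t * (1 / (1 - γ))) = γ ^ (t + 1) * (1 / (1 - γ)) := by
        rw [pow_succ]; ring
      refine ⟨?_, ?_, ?_⟩
      · intro s a b
        rw [Function.iterate_succ_apply']
        exact hbox s a b
      · intro s a b
        rw [Function.iterate_succ_apply']
        exact le_trans ((hpair s a b).1) (le_of_eq (hfixM s a b))
      · intro s a b
        rw [Function.iterate_succ_apply']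
        have h2 := (hpair s a b).2
        rw [hfixM s a b] at h2
        linarith
  have hiterP : ∀ t : ℕ,
      (∀ s a b, (TpePlus γ δ Cb N n Ph rh)^[t] (fun _ _ _ => 1 / (1 - γ)) s a b
        ∈ Set.Icc 0 (1 / (1 - γ))) ∧
      (∀ s a b, Qp s a b ≤ (TpePlus γ δ Cb N n Ph rh)^[t] (fun _ _ _ => 1 / (1 - γ)) s a b) ∧
      (∀ s a b, (TpePlus γ δ Cb N n Ph rh)^[t] (fun _ _ _ => 1 / (1 - γ)) s a b - Qp s a b
        ≤ γ ^ t * (1 / (1 - γ))) := by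
    intro t
    induction t with
    | zero =>
      refine ⟨?_, ?_, ?_⟩
      · intro s a b; simp only [Function.iterate_zero, id_eq]; exact ⟨hc0, le_rfl⟩
      · intro s a b; simpa using (hQpbox s a b).2
      · intro s a b
        simp only [Function.iterate_zero, id_eq, pow_zero, one_mul]
        linarith [(hQpbox s a b).1]
    | succ t ih =>
      obtain ⟨ihbox, ihle, ihdist⟩ := ih
      have hpair := S19Proof.TpePlus_pair (n := n) hγl hγu hδ0 hδ1 hCb hN hPh hrh hQpbox ihbox ihle
        (m := γ ^ t * (1 / (1 - γ))) (fun s a b => ihdist s a b)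
      have hbox := S19Proof.TpePlus_box (n := n) (δ := δ) (Cb := Cb) hγl hγu hN hPh hrh ihbox
      have hmul : γ * (γ ^ t * (1 / (1 - γ))) = γ ^ (t + 1) * (1 / (1 - γ)) := by
        rw [pow_succ]; ring
      refine ⟨?_, ?_, ?_⟩
      · intro s a b
        rw [Function.iterate_succ_apply']
        exact hbox s a b
      · intro s a b
        rw [Function.iterate_succ_apply']
        exact le_trans (le_of_eq (hfixP s a b).symm) ((hpair s a b).1)
      · intro s a b
        rw [Function.iterate_succ_apply']
        have h2 := (hpair s a b).2
        rw [hfixP s a b] at h2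
        linarith
  have htiter : γ ^ Titer γ N / (1 - γ) ≤ 1 / (N : ℝ) := S19Proof.titer_bound hγl hγu hN
  have hmul1 : γ ^ Titer γ N * (1 / (1 - γ)) = γ ^ Titer γ N / (1 - γ) := mul_one_div _ _
  have hKnn : (0:ℝ) ≤ γ ^ Titer γ N / (1 - γ) := by positivity
  have hNnn : (0:ℝ) ≤ 1 / (N : ℝ) := by positivity
  refine ⟨fun t s a b => ((hiterM t).2.1) s a b, fun t s a b => ((hiterP t).2.1) s a b,
    ?_, ?_, htiter, ?_, ?_⟩
  · apply S19Proof.supNormQ_le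
    intro s a b
    have h1 := (hiterM (Titer γ N)).2.1 s a b
    have h2 := (hiterM (Titer γ N)).2.2 s a b
    rw [hmul1] at h2
    rw [abs_le]
    constructor <;> linarith
  · apply S19Proof.supNormQ_le
    intro s a b
    have h1 := (hiterP (Titer γ N)).2.1 s a b
    have h2 := (hiterP (Titer γ N)).2.2 s a b
    rw [hmul1] at h2
    rw [abs_le]
    constructor <;> linarith
  · apply S19Proof.supNormS_le
    intro s
    have hbox := (hiterM (Titer γ N)).1
    have hle : valQ ((TpeMinus γ δ Cb N n Ph rh)^[Titer γ N] (fun _ _ _ => 0)) s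
        ≤ valQ Qm s := by
      have := S19Proof.valQ_le_add hbox hQmbox (k := 0)
        (fun s' a b => by linarith [(hiterM (Titer γ N)).2.1 s' a b]) s
      linarith
    have hge : valQ Qm s
        ≤ valQ ((TpeMinus γ δ Cb N n Ph rh)^[Titer γ N] (fun _ _ _ => 0)) s
          + γ ^ Titer γ N * (1 / (1 - γ)) := by
      exact S19Proof.valQ_le_add hQmbox hbox
        (fun s' a b => by linarith [(hiterM (Titer γ N)).2.2 s' a b]) s
    rw [hmul1] at hge
    rw [abs_le]
    constructor <;> linarith
  · apply S19Proof.supNormS_le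
    intro s
    have hbox := (hiterP (Titer γ N)).1
    have hle : valQ Qp s
        ≤ valQ ((TpePlus γ δ Cb N n Ph rh)^[Titer γ N] (fun _ _ _ => 1 / (1 - γ))) s := by
      have := S19Proof.valQ_le_add hQpbox hbox (k := 0)
        (fun s' a b => by linarith [(hiterP (Titer γ N)).2.1 s' a b]) s
      linarith
    have hge : valQ ((TpePlus γ δ Cb N n Ph rh)^[Titer γ N] (fun _ _ _ => 1 / (1 - γ))) s
        ≤ valQ Qp s + γ ^ Titer γ N * (1 / (1 - γ)) := by
      exact S19Proof.valQ_le_add hbox hQpbox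
        (fun s' a b => by linarith [(hiterP (Titer γ N)).2.2 s' a b]) s
    rw [hmul1] at hge
    rw [abs_le]
    constructor <;> linarith
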